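/- Let r ≥ 5 and 1 ≤ h ≤ r−4 be integers. On the set Fin (r+h+1) ⊕ Fin (r−h−2) (2r−1 points), define involutions ρ₀,…,ρ_{r−1} by: ρ₀ := (inl h, inl (h+1)); for 1 ≤ l ≤ h, ρ_l := (inl (h−l), inl (h−l+1))·(inl (h+l), inl (h+l+1)); ρ_{h+1} := (inl (2h+1), inl (2h+2)) · ∏_{j=0}^{r−h−3} (inl (2h+3+j), inr j); ρ_{h+2} := (inl (2h+2), inl (2h+3)); and for h+3 ≤ l ≤ r−1, ρ_l := (inl (h+l), inl (h+l+1))·(inr (l−h−3), inr (l−h−2)); where (p, q) denotes the transposition Equiv.swap p q and inl, inr are the inclusions into the sum type. Then the intersection property fails for this family: ⟨ρ₁,…,ρ_{h+2}⟩ ∩ ⟨ρ₀,…,ρ_{h+1}⟩ ≠ ⟨ρ₁,…,ρ_{h+1}⟩. In particular, this permutation representation graph (graph (X) of Cameron–Fernandes–Leemans, Table 6) is not a CPR graph. -/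
import Mathlib


open Sum

/-- Proposition "counterexample2": graph (X) of Cameron–Fernandes–Leemans (Table 6) is not
a CPR graph; the intersection property fails:
`⟨ρ₁,…,ρ_{h+2}⟩ ⊓ ⟨ρ₀,…,ρ_{h+1}⟩ ≠ ⟨ρ₁,…,ρ_{h+1}⟩`. -/
theorem graph_X_is_not_CPR
    (r h : ℕ) (hr : 5 ≤ r) (h1 : 1 ≤ h) (h2 : h ≤ r - 4)
    (ρ : Fin r → Equiv.Perm (Fin (r + h + 1) ⊕ Fin (r - h - 2)))
    (hzero : ∀ l : Fin r, (l : ℕ) = 0 →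
      ρ l = Equiv.swap (inl ⟨h, by omega⟩) (inl ⟨h + 1, by omega⟩))
    (hmid : ∀ l : Fin r, ∀ hl : 1 ≤ (l : ℕ) ∧ (l : ℕ) ≤ h,
      ρ l = Equiv.swap (inl ⟨h - (l : ℕ), by omega⟩) (inl ⟨h - (l : ℕ) + 1, by omega⟩) *
        Equiv.swap (inl ⟨h + (l : ℕ), by omega⟩) (inl ⟨h + (l : ℕ) + 1, by omega⟩))
    -- `ρ_{h+1}` is the product of the transposition `(2h+1, 2h+2)` (inside the first
    -- summand) with the pairwise disjoint transpositions `(inl (2h+3+j), inr j)`,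
    -- described here pointwise:
    (hsplit : ∀ l : Fin r, (l : ℕ) = h + 1 →
      (ρ l (inl ⟨2 * h + 1, by omega⟩) = inl ⟨2 * h + 2, by omega⟩) ∧
      (∀ j : Fin (r - h - 2),
        ρ l (inl ⟨2 * h + 3 + (j : ℕ), by omega⟩) = inr j ∧
        ρ l (inr j) = inl ⟨2 * h + 3 + (j : ℕ), by omega⟩) ∧
      (∀ m : Fin (r + h + 1), (m : ℕ) ≤ 2 * h → ρ l (inl m) = inl m) ∧
      (ρ l * ρ l = 1))
    (hsplit2 : ∀ l : Fin r, (l : ℕ) = h + 2 →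
      ρ l = Equiv.swap (inl ⟨2 * h + 2, by omega⟩) (inl ⟨2 * h + 3, by omega⟩))
    (hhigh : ∀ l : Fin r, ∀ hl : h + 3 ≤ (l : ℕ),
      ρ l = Equiv.swap (inl ⟨h + (l : ℕ), by omega⟩) (inl ⟨h + (l : ℕ) + 1, by omega⟩) *
        Equiv.swap (inr ⟨(l : ℕ) - h - 3, by omega⟩) (inr ⟨(l : ℕ) - h - 2, by omega⟩)) :
    Subgroup.closure (ρ '' {l : Fin r | 1 ≤ (l : ℕ) ∧ (l : ℕ) ≤ h + 2}) ⊓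
        Subgroup.closure (ρ '' {l : Fin r | (l : ℕ) ≤ h + 1}) ≠
      Subgroup.closure (ρ '' {l : Fin r | 1 ≤ (l : ℕ) ∧ (l : ℕ) ≤ h + 1}) ∧
    ¬ (∀ I J : Set (Fin r),
      Subgroup.closure (ρ '' I) ⊓ Subgroup.closure (ρ '' J) =
        Subgroup.closure (ρ '' (I ∩ J))) := by
  -- bounds for indices
  have pr1 : h + 1 < r := by omega
  have prh : h < r := by omega
  have pr2 : h + 2 < r := by omega
  have pa : 2 * h + 1 < r + h + 1 := by omega
  have pb : 2 * h + 2 < r + h + 1 := by omega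
  have pc : 2 * h + 3 < r + h + 1 := by omega
  have p0 : 0 < r - h - 2 := by omega
  have phh : h + h < r + h + 1 := by omega
  have phh1 : h + h + 1 < r + h + 1 := by omega
  have ph0 : h - h < r + h + 1 := by omega
  have ph01 : h - h + 1 < r + h + 1 := by omega
  -- generic point lemmas
  have NE : ∀ (x y : ℕ) (px : x < r + h + 1) (py : y < r + h + 1), x ≠ y →
      (inl ⟨x, px⟩ : Fin (r + h + 1) ⊕ Fin (r - h - 2)) ≠ inl ⟨y, py⟩ := by
    intro x y px py hxy hE
    rw [Sum.inl.injEq, Fin.mk.injEq] at hE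
    exact hxy hE
  have EQ : ∀ (x y : ℕ) (px : x < r + h + 1) (py : y < r + h + 1), x = y →
      (inl ⟨x, px⟩ : Fin (r + h + 1) ⊕ Fin (r - h - 2)) = inl ⟨y, py⟩ := by
    intro x y px py hxy
    subst hxy; rfl
  have SNE : ∀ (a b x : ℕ) (pa' : a < r + h + 1) (pb' : b < r + h + 1)
      (px : x < r + h + 1), x ≠ a → x ≠ b →
      Equiv.swap (inl ⟨a, pa'⟩ : Fin (r + h + 1) ⊕ Fin (r - h - 2)) (inl ⟨b, pb'⟩)
        (inl ⟨x, px⟩) = inl ⟨x, px⟩ :=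
    fun a b x pa' pb' px hxa hxb =>
      Equiv.swap_apply_of_ne_of_ne (NE x a px pa' hxa) (NE x b px pb' hxb)
  have SL : ∀ (a b x : ℕ) (pa' : a < r + h + 1) (pb' : b < r + h + 1)
      (px : x < r + h + 1), x = a →
      Equiv.swap (inl ⟨a, pa'⟩ : Fin (r + h + 1) ⊕ Fin (r - h - 2)) (inl ⟨b, pb'⟩)
        (inl ⟨x, px⟩) = inl ⟨b, pb'⟩ := by
    intro a b x pa' pb' px hxa
    rw [EQ x a px pa' hxa, Equiv.swap_apply_left]
  have SR : ∀ (a b x : ℕ) (pa' : a < r + h + 1) (pb' : b < r + h + 1)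
      (px : x < r + h + 1), x = b →
      Equiv.swap (inl ⟨a, pa'⟩ : Fin (r + h + 1) ⊕ Fin (r - h - 2)) (inl ⟨b, pb'⟩)
        (inl ⟨x, px⟩) = inl ⟨a, pa'⟩ := by
    intro a b x pa' pb' px hxb
    rw [EQ x b px pb' hxb, Equiv.swap_apply_right]
  have INR : ∀ (x y : ℕ) (px : x < r + h + 1) (py : y < r + h + 1) (j : Fin (r - h - 2)),
      Equiv.swap (inl ⟨x, px⟩ : Fin (r + h + 1) ⊕ Fin (r - h - 2)) (inl ⟨y, py⟩)
        (inr j) = inr j :=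
    fun x y px py j => Equiv.swap_apply_of_ne_of_ne Sum.inr_ne_inl Sum.inr_ne_inl
  -- facts about ρ_{h+1}
  obtain ⟨hρ1, hρ2, hρ3, hρ4⟩ := hsplit ⟨h + 1, pr1⟩ rfl
  have hρ5 : ρ ⟨h + 1, pr1⟩ (inl ⟨2 * h + 2, pb⟩) = inl ⟨2 * h + 1, pa⟩ := by
    have h5 : ρ ⟨h + 1, pr1⟩ (ρ ⟨h + 1, pr1⟩ (inl ⟨2 * h + 1, pa⟩)) = inl ⟨2 * h + 1, pa⟩ := by
      rw [← Equiv.Perm.mul_apply, hρ4, Equiv.Perm.one_apply]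
    rwa [hρ1] at h5
  have hρ23 : ρ ⟨h + 1, pr1⟩ (inl ⟨2 * h + 3, pc⟩) = inr ⟨0, p0⟩ := (hρ2 ⟨0, p0⟩).1
  have hρ23' : ρ ⟨h + 1, pr1⟩ (inr ⟨0, p0⟩) = inl ⟨2 * h + 3, pc⟩ := (hρ2 ⟨0, p0⟩).2
  have hρhh : ρ ⟨h + 1, pr1⟩ (inl ⟨h + h, phh⟩) = inl ⟨h + h, phh⟩ :=
    hρ3 ⟨h + h, phh⟩ (by show h + h ≤ 2 * h; omega)
  have hρh0 : ρ ⟨h + 1, pr1⟩ (inl ⟨h - h, ph0⟩) = inl ⟨h - h, ph0⟩ :=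
    hρ3 ⟨h - h, ph0⟩ (by show h - h ≤ 2 * h; omega)
  have hρhh1 : ρ ⟨h + 1, pr1⟩ (inl ⟨h + h + 1, phh1⟩) = inl ⟨2 * h + 2, pb⟩ := by
    rw [EQ (h + h + 1) (2 * h + 1) phh1 pa (by omega), hρ1]
  -- explicit forms of ρ_h and ρ_{h+2}
  have hc : ρ ⟨h + 2, pr2⟩ =
      Equiv.swap (inl ⟨2 * h + 2, by omega⟩) (inl ⟨2 * h + 3, by omega⟩) :=
    hsplit2 ⟨h + 2, pr2⟩ rfl
  have ha : ρ ⟨h, prh⟩ =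
      Equiv.swap (inl ⟨h - h, by omega⟩) (inl ⟨h - h + 1, by omega⟩) *
        Equiv.swap (inl ⟨h + h, by omega⟩) (inl ⟨h + h + 1, by omega⟩) :=
    hmid ⟨h, prh⟩ ⟨h1, le_rfl⟩
  have ha1 : ρ ⟨h, prh⟩ (inl ⟨2 * h + 1, pa⟩) = inl ⟨h + h, phh⟩ := by
    rw [ha, Equiv.Perm.mul_apply, SR (h + h) (h + h + 1) (2 * h + 1) phh phh1 pa (by omega),
      SNE (h - h) (h - h + 1) (h + h) ph0 ph01 phh (by omega) (by omega)]
  have ha2 : ρ ⟨h, prh⟩ (inr ⟨0, p0⟩) = inr ⟨0, p0⟩ := by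
    rw [ha, Equiv.Perm.mul_apply, INR, INR]
  ------------------------------------------------------------------
  -- t ∈ A
  ------------------------------------------------------------------
  have memA1 : ρ ⟨h + 1, pr1⟩ ∈
      Subgroup.closure (ρ '' {l : Fin r | 1 ≤ (l : ℕ) ∧ (l : ℕ) ≤ h + 2}) :=
    Subgroup.subset_closure
      ⟨⟨h + 1, pr1⟩, ⟨by show 1 ≤ h + 1; omega, by show h + 1 ≤ h + 2; omega⟩, rfl⟩
  have memA2 : ρ ⟨h + 2, pr2⟩ ∈
      Subgroup.closure (ρ '' {l : Fin r | 1 ≤ (l : ℕ) ∧ (l : ℕ) ≤ h + 2}) :=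
    Subgroup.subset_closure ⟨⟨h + 2, pr2⟩, ⟨by show 1 ≤ h + 2; omega, le_rfl⟩, rfl⟩
  have memAh : ρ ⟨h, prh⟩ ∈
      Subgroup.closure (ρ '' {l : Fin r | 1 ≤ (l : ℕ) ∧ (l : ℕ) ≤ h + 2}) :=
    Subgroup.subset_closure ⟨⟨h, prh⟩, ⟨h1, by show h ≤ h + 2; omega⟩, rfl⟩
  have hq : ρ ⟨h + 1, pr1⟩ * ρ ⟨h + 2, pr2⟩ * (ρ ⟨h + 1, pr1⟩)⁻¹ =
      Equiv.swap (inl ⟨2 * h + 1, pa⟩) (inr ⟨0, p0⟩) := by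
    rw [hc, ← Equiv.swap_apply_apply, hρ5, hρ23]
  have m1 : Equiv.swap (inl ⟨2 * h + 1, pa⟩ : Fin (r + h + 1) ⊕ Fin (r - h - 2))
      (inr ⟨0, p0⟩) ∈
      Subgroup.closure (ρ '' {l : Fin r | 1 ≤ (l : ℕ) ∧ (l : ℕ) ≤ h + 2}) := by
    rw [← hq]
    exact mul_mem (mul_mem memA1 memA2) (inv_mem memA1)
  have step2 : ρ ⟨h, prh⟩ *
      Equiv.swap (inl ⟨2 * h + 1, pa⟩ : Fin (r + h + 1) ⊕ Fin (r - h - 2)) (inr ⟨0, p0⟩) *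
      (ρ ⟨h, prh⟩)⁻¹ = Equiv.swap (inl ⟨h + h, phh⟩) (inr ⟨0, p0⟩) := by
    rw [← Equiv.swap_apply_apply, ha1, ha2]
  have m2 : Equiv.swap (inl ⟨h + h, phh⟩ : Fin (r + h + 1) ⊕ Fin (r - h - 2))
      (inr ⟨0, p0⟩) ∈
      Subgroup.closure (ρ '' {l : Fin r | 1 ≤ (l : ℕ) ∧ (l : ℕ) ≤ h + 2}) := by
    rw [← step2]
    exact mul_mem (mul_mem memAh m1) (inv_mem memAh)
  have hqe1 : Equiv.swap (inl ⟨2 * h + 1, pa⟩ : Fin (r + h + 1) ⊕ Fin (r - h - 2))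
      (inr ⟨0, p0⟩) (inl ⟨h + h, phh⟩) = inl ⟨h + h, phh⟩ :=
    Equiv.swap_apply_of_ne_of_ne (NE (h + h) (2 * h + 1) phh pa (by omega)) Sum.inl_ne_inr
  have hqe2 : Equiv.swap (inl ⟨2 * h + 1, pa⟩ : Fin (r + h + 1) ⊕ Fin (r - h - 2))
      (inr ⟨0, p0⟩) (inr ⟨0, p0⟩) = inl ⟨2 * h + 1, pa⟩ := Equiv.swap_apply_right _ _
  have step3 : Equiv.swap (inl ⟨2 * h + 1, pa⟩ : Fin (r + h + 1) ⊕ Fin (r - h - 2))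
        (inr ⟨0, p0⟩) *
      Equiv.swap (inl ⟨h + h, phh⟩ : Fin (r + h + 1) ⊕ Fin (r - h - 2)) (inr ⟨0, p0⟩) *
      (Equiv.swap (inl ⟨2 * h + 1, pa⟩ : Fin (r + h + 1) ⊕ Fin (r - h - 2)) (inr ⟨0, p0⟩))⁻¹ =
      Equiv.swap (inl ⟨h + h, phh⟩) (inl ⟨2 * h + 1, pa⟩) := by
    rw [← Equiv.swap_apply_apply, hqe1, hqe2]
  have m3 : Equiv.swap (inl ⟨h + h, phh⟩ : Fin (r + h + 1) ⊕ Fin (r - h - 2))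
      (inl ⟨2 * h + 1, pa⟩) ∈
      Subgroup.closure (ρ '' {l : Fin r | 1 ≤ (l : ℕ) ∧ (l : ℕ) ≤ h + 2}) := by
    rw [← step3]
    exact mul_mem (mul_mem m1 m2) (inv_mem m1)
  have step4 : ρ ⟨h + 1, pr1⟩ *
      Equiv.swap (inl ⟨h + h, phh⟩ : Fin (r + h + 1) ⊕ Fin (r - h - 2))
        (inl ⟨2 * h + 1, pa⟩) * (ρ ⟨h + 1, pr1⟩)⁻¹ =
      Equiv.swap (inl ⟨h + h, phh⟩) (inl ⟨2 * h + 2, pb⟩) := by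
    rw [← Equiv.swap_apply_apply, hρhh, hρ1]
  have m4 : Equiv.swap (inl ⟨h + h, phh⟩ : Fin (r + h + 1) ⊕ Fin (r - h - 2))
      (inl ⟨2 * h + 2, pb⟩) ∈
      Subgroup.closure (ρ '' {l : Fin r | 1 ≤ (l : ℕ) ∧ (l : ℕ) ≤ h + 2}) := by
    rw [← step4]
    exact mul_mem (mul_mem memA1 m3) (inv_mem memA1)
  have step5 : Equiv.swap (inl ⟨h + h, phh⟩ : Fin (r + h + 1) ⊕ Fin (r - h - 2))
        (inl ⟨2 * h + 2, pb⟩) *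
      Equiv.swap (inl ⟨h + h, phh⟩ : Fin (r + h + 1) ⊕ Fin (r - h - 2)) (inl ⟨2 * h + 1, pa⟩) *
      (Equiv.swap (inl ⟨h + h, phh⟩ : Fin (r + h + 1) ⊕ Fin (r - h - 2))
        (inl ⟨2 * h + 2, pb⟩))⁻¹ =
      Equiv.swap (inl ⟨2 * h + 1, pa⟩) (inl ⟨2 * h + 2, pb⟩) := by
    rw [← Equiv.swap_apply_apply, Equiv.swap_apply_left,
      SNE (h + h) (2 * h + 2) (2 * h + 1) phh pb pa (by omega) (by omega), Equiv.swap_comm]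
  have htA : Equiv.swap (inl ⟨2 * h + 1, pa⟩ : Fin (r + h + 1) ⊕ Fin (r - h - 2))
      (inl ⟨2 * h + 2, pb⟩) ∈
      Subgroup.closure (ρ '' {l : Fin r | 1 ≤ (l : ℕ) ∧ (l : ℕ) ≤ h + 2}) := by
    rw [← step5]
    exact mul_mem (mul_mem m4 m3) (inv_mem m4)
  ------------------------------------------------------------------
  -- t ∈ B
  ------------------------------------------------------------------
  have memB1 : ρ ⟨h + 1, pr1⟩ ∈
      Subgroup.closure (ρ '' {l : Fin r | (l : ℕ) ≤ h + 1}) :=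
    Subgroup.subset_closure ⟨⟨h + 1, pr1⟩, by show h + 1 ≤ h + 1; omega, rfl⟩
  have hBind : ∀ k, k ≤ h → ∀ (q1 : h - k < r + h + 1) (q2 : h + k + 1 < r + h + 1),
      Equiv.swap (inl ⟨h - k, q1⟩ : Fin (r + h + 1) ⊕ Fin (r - h - 2)) (inl ⟨h + k + 1, q2⟩) ∈
        Subgroup.closure (ρ '' {l : Fin r | (l : ℕ) ≤ h + 1}) := by
    intro k
    induction k with
    | zero =>
      intro _ q1 q2
      have h0 : ρ ⟨0, by omega⟩ = Equiv.swap (inl ⟨h, by omega⟩) (inl ⟨h + 1, by omega⟩) :=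
        hzero ⟨0, by omega⟩ rfl
      have e : Equiv.swap (inl ⟨h - 0, q1⟩ : Fin (r + h + 1) ⊕ Fin (r - h - 2))
          (inl ⟨h + 0 + 1, q2⟩) = ρ ⟨0, by omega⟩ := h0.symm
      rw [e]
      exact Subgroup.subset_closure ⟨⟨0, by omega⟩, by show 0 ≤ h + 1; omega, rfl⟩
    | succ k ih =>
      intro hk q1 q2
      have hkr : k + 1 < r := by omega
      have pA : h + (k + 1) < r + h + 1 := by omega
      have pB : h + (k + 1) + 1 < r + h + 1 := by omega
      have pC : h - (k + 1) < r + h + 1 := by omega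
      have pD : h - (k + 1) + 1 < r + h + 1 := by omega
      have pk1 : h - k < r + h + 1 := by omega
      have pk2 : h + k + 1 < r + h + 1 := by omega
      have hak : ρ ⟨k + 1, hkr⟩ =
          Equiv.swap (inl ⟨h - (k + 1), by omega⟩) (inl ⟨h - (k + 1) + 1, by omega⟩) *
            Equiv.swap (inl ⟨h + (k + 1), by omega⟩) (inl ⟨h + (k + 1) + 1, by omega⟩) :=
        hmid ⟨k + 1, hkr⟩ ⟨by show 1 ≤ k + 1; omega, by show k + 1 ≤ h; omega⟩
      have e1 : ρ ⟨k + 1, hkr⟩ (inl ⟨h - k, pk1⟩) = inl ⟨h - (k + 1), q1⟩ := by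
        rw [hak, Equiv.Perm.mul_apply,
          SNE (h + (k + 1)) (h + (k + 1) + 1) (h - k) pA pB pk1 (by omega) (by omega),
          SR (h - (k + 1)) (h - (k + 1) + 1) (h - k) pC pD pk1 (by omega)]
      have e2 : ρ ⟨k + 1, hkr⟩ (inl ⟨h + k + 1, pk2⟩) = inl ⟨h + (k + 1) + 1, q2⟩ := by
        rw [hak, Equiv.Perm.mul_apply,
          SL (h + (k + 1)) (h + (k + 1) + 1) (h + k + 1) pA pB pk2 (by omega),
          SNE (h - (k + 1)) (h - (k + 1) + 1) (h + (k + 1) + 1) pC pD pB (by omega) (by omega)]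
      have key : ρ ⟨k + 1, hkr⟩ *
          Equiv.swap (inl ⟨h - k, pk1⟩ : Fin (r + h + 1) ⊕ Fin (r - h - 2))
            (inl ⟨h + k + 1, pk2⟩) * (ρ ⟨k + 1, hkr⟩)⁻¹ =
          Equiv.swap (inl ⟨h - (k + 1), q1⟩) (inl ⟨h + (k + 1) + 1, q2⟩) := by
        rw [← Equiv.swap_apply_apply, e1, e2]
      rw [← key]
      have hmem : ρ ⟨k + 1, hkr⟩ ∈ Subgroup.closure (ρ '' {l : Fin r | (l : ℕ) ≤ h + 1}) :=
        Subgroup.subset_closure ⟨⟨k + 1, hkr⟩, by show k + 1 ≤ h + 1; omega, rfl⟩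
      exact mul_mem (mul_mem hmem (ih (by omega) pk1 pk2)) (inv_mem hmem)
  have mB1 : Equiv.swap (inl ⟨h - h, ph0⟩ : Fin (r + h + 1) ⊕ Fin (r - h - 2))
      (inl ⟨h + h + 1, phh1⟩) ∈
      Subgroup.closure (ρ '' {l : Fin r | (l : ℕ) ≤ h + 1}) := hBind h le_rfl ph0 phh1
  have stepB1 : ρ ⟨h + 1, pr1⟩ *
      Equiv.swap (inl ⟨h - h, ph0⟩ : Fin (r + h + 1) ⊕ Fin (r - h - 2))
        (inl ⟨h + h + 1, phh1⟩) * (ρ ⟨h + 1, pr1⟩)⁻¹ =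
      Equiv.swap (inl ⟨h - h, ph0⟩) (inl ⟨2 * h + 2, pb⟩) := by
    rw [← Equiv.swap_apply_apply, hρh0, hρhh1]
  have mB2 : Equiv.swap (inl ⟨h - h, ph0⟩ : Fin (r + h + 1) ⊕ Fin (r - h - 2))
      (inl ⟨2 * h + 2, pb⟩) ∈
      Subgroup.closure (ρ '' {l : Fin r | (l : ℕ) ≤ h + 1}) := by
    rw [← stepB1]
    exact mul_mem (mul_mem memB1 mB1) (inv_mem memB1)
  have stepB2 : Equiv.swap (inl ⟨h - h, ph0⟩ : Fin (r + h + 1) ⊕ Fin (r - h - 2))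
        (inl ⟨h + h + 1, phh1⟩) *
      Equiv.swap (inl ⟨h - h, ph0⟩ : Fin (r + h + 1) ⊕ Fin (r - h - 2)) (inl ⟨2 * h + 2, pb⟩) *
      (Equiv.swap (inl ⟨h - h, ph0⟩ : Fin (r + h + 1) ⊕ Fin (r - h - 2))
        (inl ⟨h + h + 1, phh1⟩))⁻¹ =
      Equiv.swap (inl ⟨2 * h + 1, pa⟩) (inl ⟨2 * h + 2, pb⟩) := by
    rw [← Equiv.swap_apply_apply, Equiv.swap_apply_left,
      SNE (h - h) (h + h + 1) (2 * h + 2) ph0 phh1 pb (by omega) (by omega),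
      EQ (h + h + 1) (2 * h + 1) phh1 pa (by omega)]
  have htB : Equiv.swap (inl ⟨2 * h + 1, pa⟩ : Fin (r + h + 1) ⊕ Fin (r - h - 2))
      (inl ⟨2 * h + 2, pb⟩) ∈
      Subgroup.closure (ρ '' {l : Fin r | (l : ℕ) ≤ h + 1}) := by
    rw [← stepB2]
    exact mul_mem (mul_mem mB1 mB2) (inv_mem mB1)
  ------------------------------------------------------------------
  -- t ∉ C  (invariant argument)
  ------------------------------------------------------------------
  have hζ : (Equiv.Perm.sign (ρ ⟨h + 1, pr1⟩))⁻¹ = Equiv.Perm.sign (ρ ⟨h + 1, pr1⟩) :=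
    inv_eq_iff_mul_eq_one.mpr (Int.units_mul_self _)
  have htC : Equiv.swap (inl ⟨2 * h + 1, pa⟩ : Fin (r + h + 1) ⊕ Fin (r - h - 2))
      (inl ⟨2 * h + 2, pb⟩) ∉
      Subgroup.closure (ρ '' {l : Fin r | 1 ≤ (l : ℕ) ∧ (l : ℕ) ≤ h + 1}) := by
    intro hmem
    have hP : ∀ gg ∈ Subgroup.closure (ρ '' {l : Fin r | 1 ≤ (l : ℕ) ∧ (l : ℕ) ≤ h + 1}),
        ((∀ j : Fin (r - h - 2), gg (inr j) = inr j ∧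
            gg (ρ ⟨h + 1, pr1⟩ (inr j)) = ρ ⟨h + 1, pr1⟩ (inr j)) ∧
          Equiv.Perm.sign gg = 1) ∨
        ((∀ j : Fin (r - h - 2), gg (inr j) = ρ ⟨h + 1, pr1⟩ (inr j) ∧
            gg (ρ ⟨h + 1, pr1⟩ (inr j)) = inr j) ∧
          Equiv.Perm.sign gg = Equiv.Perm.sign (ρ ⟨h + 1, pr1⟩)) := by
      intro gg hgg
      induction hgg using Subgroup.closure_induction with
      | mem x hx =>
        obtain ⟨l, ⟨hl1, hl2⟩, rfl⟩ := hx
        have hlr : (l : ℕ) < r := l.isLt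
        by_cases hcase : (l : ℕ) ≤ h
        · -- ρ_l is a product of two transpositions fixing the tail
          have hx := hmid l ⟨hl1, hcase⟩
          have pl1 : h - (l : ℕ) < r + h + 1 := by omega
          have pl2 : h - (l : ℕ) + 1 < r + h + 1 := by omega
          have pl3 : h + (l : ℕ) < r + h + 1 := by omega
          have pl4 : h + (l : ℕ) + 1 < r + h + 1 := by omega
          left
          constructor
          · intro j
            have hj : (j : ℕ) < r - h - 2 := j.isLt
            have pj : 2 * h + 3 + (j : ℕ) < r + h + 1 := by omega
            constructor
            · rw [hx, Equiv.Perm.mul_apply, INR, INR]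
            · rw [(hρ2 j).2, hx, Equiv.Perm.mul_apply,
                SNE (h + (l : ℕ)) (h + (l : ℕ) + 1) (2 * h + 3 + (j : ℕ)) pl3 pl4 pj
                  (by omega) (by omega),
                SNE (h - (l : ℕ)) (h - (l : ℕ) + 1) (2 * h + 3 + (j : ℕ)) pl1 pl2 pj
                  (by omega) (by omega)]
          · have sgn1 : Equiv.Perm.sign
                (Equiv.swap (inl ⟨h - (l : ℕ), pl1⟩ : Fin (r + h + 1) ⊕ Fin (r - h - 2))
                  (inl ⟨h - (l : ℕ) + 1, pl2⟩)) = -1 :=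
              Equiv.Perm.sign_swap (NE _ _ _ _ (by omega))
            have sgn2 : Equiv.Perm.sign
                (Equiv.swap (inl ⟨h + (l : ℕ), pl3⟩ : Fin (r + h + 1) ⊕ Fin (r - h - 2))
                  (inl ⟨h + (l : ℕ) + 1, pl4⟩)) = -1 :=
              Equiv.Perm.sign_swap (NE _ _ _ _ (by omega))
            rw [hx, map_mul, sgn1, sgn2]
            exact Int.units_mul_self (-1)
        · -- l = h+1
          have : l = ⟨h + 1, pr1⟩ := Fin.ext (by show (l : ℕ) = h + 1; omega)
          subst this
          right
          refine ⟨fun j => ⟨rfl, ?_⟩, rfl⟩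
          rw [← Equiv.Perm.mul_apply, hρ4, Equiv.Perm.one_apply]
      | one =>
        left
        exact ⟨fun j => ⟨rfl, rfl⟩, map_one Equiv.Perm.sign⟩
      | mul x y hx hy px py =>
        rcases px with ⟨fx, sx⟩ | ⟨wx, sx⟩ <;> rcases py with ⟨fy, sy⟩ | ⟨wy, sy⟩
        · left
          refine ⟨fun j => ⟨?_, ?_⟩, by rw [map_mul, sx, sy, one_mul]⟩
          · rw [Equiv.Perm.mul_apply, (fy j).1, (fx j).1]
          · rw [Equiv.Perm.mul_apply, (fy j).2, (fx j).2]
        · right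
          refine ⟨fun j => ⟨?_, ?_⟩, by rw [map_mul, sx, sy, one_mul]⟩
          · rw [Equiv.Perm.mul_apply, (wy j).1, (fx j).2]
          · rw [Equiv.Perm.mul_apply, (wy j).2, (fx j).1]
        · right
          refine ⟨fun j => ⟨?_, ?_⟩, by rw [map_mul, sx, sy, mul_one]⟩
          · rw [Equiv.Perm.mul_apply, (fy j).1, (wx j).1]
          · rw [Equiv.Perm.mul_apply, (fy j).2, (wx j).2]
        · left
          refine ⟨fun j => ⟨?_, ?_⟩, by rw [map_mul, sx, sy]; exact Int.units_mul_self _⟩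
          · rw [Equiv.Perm.mul_apply, (wy j).1, (wx j).2]
          · rw [Equiv.Perm.mul_apply, (wy j).2, (wx j).1]
      | inv x hx px =>
        rcases px with ⟨fx, sx⟩ | ⟨wx, sx⟩
        · left
          refine ⟨fun j => ⟨?_, ?_⟩, by rw [map_inv, sx, inv_one]⟩
          · exact Equiv.Perm.inv_eq_iff_eq.mpr ((fx j).1).symm
          · exact Equiv.Perm.inv_eq_iff_eq.mpr ((fx j).2).symm
        · right
          refine ⟨fun j => ⟨?_, ?_⟩, by rw [map_inv, sx, hζ]⟩
          · exact Equiv.Perm.inv_eq_iff_eq.mpr ((wx j).2).symm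
          · exact Equiv.Perm.inv_eq_iff_eq.mpr ((wx j).1).symm
    rcases hP _ hmem with ⟨_, hs⟩ | ⟨hw, _⟩
    · rw [Equiv.Perm.sign_swap (NE (2 * h + 1) (2 * h + 2) pa pb (by omega))] at hs
      exact absurd hs (by decide)
    · have hcontr := (hw ⟨0, p0⟩).1
      rw [hρ23'] at hcontr
      rw [Equiv.swap_apply_of_ne_of_ne Sum.inr_ne_inl Sum.inr_ne_inl] at hcontr
      exact absurd hcontr (by simp)
  ------------------------------------------------------------------
  -- conclusion
  ------------------------------------------------------------------
  have key : Subgroup.closure (ρ '' {l : Fin r | 1 ≤ (l : ℕ) ∧ (l : ℕ) ≤ h + 2}) ⊓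
        Subgroup.closure (ρ '' {l : Fin r | (l : ℕ) ≤ h + 1}) ≠
      Subgroup.closure (ρ '' {l : Fin r | 1 ≤ (l : ℕ) ∧ (l : ℕ) ≤ h + 1}) := by
    intro hEq
    exact htC (hEq ▸ Subgroup.mem_inf.mpr ⟨htA, htB⟩)
  refine ⟨key, fun hIP => key ?_⟩
  have hIJ : ({l : Fin r | 1 ≤ (l : ℕ) ∧ (l : ℕ) ≤ h + 2} ∩ {l : Fin r | (l : ℕ) ≤ h + 1}) =
      {l : Fin r | 1 ≤ (l : ℕ) ∧ (l : ℕ) ≤ h + 1} := by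
    ext l
    simp only [Set.mem_inter_iff, Set.mem_setOf_eq]
    omega
  rw [hIP {l : Fin r | 1 ≤ (l : ℕ) ∧ (l : ℕ) ≤ h + 2} {l : Fin r | (l : ℕ) ≤ h + 1}, hIJ]
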